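/- For a Hermitian positive definite matrix E, the function Z ↦ log det(Z) − tr(Z E) + M over Hermitian positive definite M×M matrices Z attains its unique maximum at Z = E⁻¹, with maximum value log det(E⁻¹) = −log det(E). -/

import Mathlib

open Matrix ComplexOrder

lemma aux_trace_eq_sum_eigenvalues {n : Type*} [Fintype n] [DecidableEq n]
    {A : Matrix n n ℂ} (hA : A.IsHermitian) :
    A.trace = ∑ i, (hA.eigenvalues i : ℂ) := by
  exact hA.trace_eq_sum_eigenvalues

lemma aux_posDef_conj {n : Type*} [Fintype n] [DecidableEq n] {A B : Matrix n n ℂ}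
    (hA : A.PosDef) (hB : IsUnit B) : (Bᴴ * A * B).PosDef := by
  exact hA.conjTranspose_mul_mul_same (mulVec_injective_of_isUnit hB)

lemma aux_key (M : ℕ) (A : Matrix (Fin M) (Fin M) ℂ) (hA : A.PosDef) :
    Real.log A.det.re ≤ A.trace.re - M ∧
      (Real.log A.det.re = A.trace.re - M ↔ A = 1) := by
  have hμ : ∀ i, 0 < hA.1.eigenvalues i := hA.eigenvalues_pos
  have hdet : A.det.re = ∏ i, hA.1.eigenvalues i := by
    rw [hA.1.det_eq_prod_eigenvalues]
    norm_cast
  have htr : A.trace.re = ∑ i, hA.1.eigenvalues i := by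
    rw [aux_trace_eq_sum_eigenvalues hA.1, ← Complex.ofReal_sum]
    exact Complex.ofReal_re _
  have hlog : Real.log A.det.re = ∑ i, Real.log (hA.1.eigenvalues i) := by
    rw [hdet, Real.log_prod]
    exact fun i _ => (hμ i).ne'
  have hle : ∀ i, Real.log (hA.1.eigenvalues i) ≤ hA.1.eigenvalues i - 1 :=
    fun i => Real.log_le_sub_one_of_pos (hμ i)
  constructor
  · rw [hlog, htr]
    calc ∑ i, Real.log (hA.1.eigenvalues i) ≤ ∑ i, (hA.1.eigenvalues i - 1) :=
          Finset.sum_le_sum fun i _ => hle i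
      _ = (∑ i, hA.1.eigenvalues i) - M := by
          rw [Finset.sum_sub_distrib]; simp
  · constructor
    · intro h
      have hsum : ∑ i, (hA.1.eigenvalues i - 1 - Real.log (hA.1.eigenvalues i)) = 0 := by
        rw [hlog, htr] at h
        simp only [Finset.sum_sub_distrib]
        simp only [Finset.sum_const, Finset.card_univ, Fintype.card_fin, nsmul_eq_mul, mul_one]
        linarith
      have hone : ∀ i, hA.1.eigenvalues i = 1 := by
        intro i
        by_contra hne
        have hstrict : Real.log (hA.1.eigenvalues i) < hA.1.eigenvalues i - 1 :=
          Real.log_lt_sub_one_of_pos (hμ i) hne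
        have hpos : 0 < ∑ j, (hA.1.eigenvalues j - 1 - Real.log (hA.1.eigenvalues j)) := by
          apply Finset.sum_pos' (fun j _ => by linarith [hle j])
          exact ⟨i, Finset.mem_univ i, by linarith⟩
        linarith
      have hsp : A = (hA.1.eigenvectorUnitary : Matrix (Fin M) (Fin M) ℂ) *
          Matrix.diagonal (RCLike.ofReal ∘ hA.1.eigenvalues) *
          (star (hA.1.eigenvectorUnitary : Matrix (Fin M) (Fin M) ℂ)) := hA.1.spectral_theorem
      rw [hsp]
      have hfun : (RCLike.ofReal ∘ hA.1.eigenvalues : Fin M → ℂ) = fun _ => 1 :=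
        funext fun i => by simp [Function.comp, hone i]
      rw [hfun]
      rw [show Matrix.diagonal (fun _ : Fin M => (1:ℂ)) = 1 from Matrix.diagonal_one]
      rw [mul_one]
      exact Matrix.mem_unitaryGroup_iff.mp hA.1.eigenvectorUnitary.2
    · intro h
      subst h
      simp [Matrix.trace_one]

/-- For Hermitian positive definite `E`, the function
`Z ↦ log det Z − tr(Z E) + M` over Hermitian positive definite `Z` attains its
unique maximum at `Z = E⁻¹`, with maximum value `log det(E⁻¹) = −log det E`. -/
theorem logdet_trace_max_at_inv (M : ℕ) (E : Matrix (Fin M) (Fin M) ℂ)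
    (hE : E.PosDef) :
    (∀ Z : Matrix (Fin M) (Fin M) ℂ, Z.PosDef →
        Real.log Z.det.re - (Z * E).trace.re + M
          ≤ Real.log (E⁻¹).det.re - (E⁻¹ * E).trace.re + M) ∧
    (∀ Z : Matrix (Fin M) (Fin M) ℂ, Z.PosDef →
        (Real.log Z.det.re - (Z * E).trace.re + M
            = Real.log (E⁻¹).det.re - (E⁻¹ * E).trace.re + M ↔ Z = E⁻¹)) ∧
    Real.log (E⁻¹).det.re = -Real.log E.det.re := by
  -- basic facts about E
  have hEdet : 0 < E.det := hE.det_pos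
  have hEdetre : 0 < E.det.re := (Complex.lt_def.mp hEdet).1
  have hEdetim : E.det.im = 0 := ((Complex.lt_def.mp hEdet).2).symm
  have hEdetne : E.det ≠ 0 := hEdet.ne'
  have hEunit : IsUnit E.det := isUnit_iff_ne_zero.mpr hEdetne
  -- the inverse fact
  have hinvmul : E⁻¹ * E = 1 := Matrix.nonsing_inv_mul E hEunit
  have htrinv : ((E⁻¹ * E).trace).re = (M : ℝ) := by
    rw [hinvmul, Matrix.trace_one]
    simp
  -- part 3
  have hdetinv : (E⁻¹).det = E.det⁻¹ := by rw [Matrix.det_nonsing_inv, Ring.inverse_eq_inv]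
  have hdetinvre : (E⁻¹).det.re = (E.det.re)⁻¹ := by
    rw [hdetinv]
    have : E.det = (E.det.re : ℂ) := Complex.ext rfl (by simp [hEdetim])
    rw [this, ← Complex.ofReal_inv]
    exact Complex.ofReal_re _
  have hpart3 : Real.log (E⁻¹).det.re = -Real.log E.det.re := by
    rw [hdetinvre, Real.log_inv]
  -- square root of E
  open scoped MatrixOrder in set S := CFC.sqrt E with hSdef
  open scoped MatrixOrder in have hSS : S * S = E := CFC.sqrt_mul_sqrt_self E hE.posSemidef.nonneg
  open scoped MatrixOrder in have hSherm : S.IsHermitian := (CFC.sqrt_nonneg E).posSemidef.1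
  have hSdetne : S.det ≠ 0 := by
    intro h
    apply hEdetne
    rw [← hSS, Matrix.det_mul, h, mul_zero]
  have hSunit : IsUnit S := (Matrix.isUnit_iff_isUnit_det S).mpr (isUnit_iff_ne_zero.mpr hSdetne)
  have hSinv : S⁻¹ * S = 1 := Matrix.nonsing_inv_mul S (isUnit_iff_ne_zero.mpr hSdetne)
  have hSinv' : S * S⁻¹ = 1 := Matrix.mul_nonsing_inv S (isUnit_iff_ne_zero.mpr hSdetne)
  -- facts for each Z
  have hmain : ∀ Z : Matrix (Fin M) (Fin M) ℂ, Z.PosDef →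
      (Real.log Z.det.re + Real.log E.det.re ≤ (Z * E).trace.re - M ∧
        (Real.log Z.det.re + Real.log E.det.re = (Z * E).trace.re - M ↔ Z = E⁻¹)) := by
    intro Z hZ
    have hZdet : 0 < Z.det := hZ.det_pos
    have hZdetre : 0 < Z.det.re := (Complex.lt_def.mp hZdet).1
    have hZdetim : Z.det.im = 0 := ((Complex.lt_def.mp hZdet).2).symm
    have hA : (Sᴴ * Z * S).PosDef := aux_posDef_conj hZ hSunit
    have hAS : Sᴴ * Z * S = S * Z * S := by rw [hSherm.eq]
    -- trace of A
    have htrA : (Sᴴ * Z * S).trace = (Z * E).trace := by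
      rw [hAS, Matrix.mul_assoc, Matrix.trace_mul_comm, Matrix.mul_assoc, hSS]
    -- det of A
    have hdetA : (Sᴴ * Z * S).det = Z.det * E.det := by
      rw [hAS, Matrix.det_mul, Matrix.det_mul, ← hSS, Matrix.det_mul]
      ring
    have hdetAre : (Sᴴ * Z * S).det.re = Z.det.re * E.det.re := by
      rw [hdetA, Complex.mul_re, hZdetim, hEdetim]
      ring
    have hlogA : Real.log (Sᴴ * Z * S).det.re = Real.log Z.det.re + Real.log E.det.re := by
      rw [hdetAre, Real.log_mul hZdetre.ne' hEdetre.ne']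
    obtain ⟨hkey1, hkey2⟩ := aux_key M (Sᴴ * Z * S) hA
    rw [hlogA, htrA] at hkey1 hkey2
    refine ⟨hkey1, hkey2.trans ?_⟩
    constructor
    · intro h1
      rw [hAS] at h1
      calc Z = S⁻¹ * (S * Z * S) * S⁻¹ := by
            rw [Matrix.mul_assoc S Z S, ← Matrix.mul_assoc S⁻¹ S (Z * S), hSinv, one_mul,
              Matrix.mul_assoc Z S S⁻¹, hSinv', mul_one]
        _ = E⁻¹ := by
            rw [h1, mul_one, ← Matrix.mul_inv_rev, hSS]
    · intro h1
      subst h1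
      rw [hAS, ← hSS, Matrix.mul_inv_rev, ← Matrix.mul_assoc S S⁻¹ S⁻¹, hSinv', one_mul, hSinv]
  refine ⟨fun Z hZ => ?_, fun Z hZ => ?_, hpart3⟩
  · have h := (hmain Z hZ).1
    rw [htrinv, hpart3]
    linarith
  · rw [htrinv, hpart3]
    rw [← (hmain Z hZ).2]
    constructor <;> intro h <;> linarith
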